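/- Let X be a finite-dimensional Banach space, Ω1, Ω2 ⊂ X closed sets, and U ⊂ X a bounded set with Ω1 ∩ Ω2 ∩ U ≠ ∅. Then the pair of indicator functions (i_{Ω1}, i_{Ω2}) is firmly quasiuniformly lower semicontinuous on U, i.e. Θ†_U(i_{Ω1}, i_{Ω2}) = 0. -/
import Mathlib


open Metric Set Filter

noncomputable section

/-- `V` is an essentially interior subset of `U`. -/
def EssInt {X : Type*} [MetricSpace X] (U V : Set X) : Prop :=
  ∃ ρ > (0 : ℝ), ∀ v ∈ V, Metric.ball v ρ ⊆ U

/-- The uniform infimum `Λ°_W(φ1,φ2)` of the decoupled sum over `W`. -/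
def lambdaCirc {X : Type*} [MetricSpace X] (φ1 φ2 : X → EReal) (W : Set X) : EReal :=
  ⨆ η : {η : ℝ // 0 < η},
    sInf {v : EReal | ∃ x1 ∈ W, ∃ x2 ∈ W, dist x1 x2 < η.1 ∧ v = φ1 x1 + φ2 x2}

/-- The quasiuniform infimum `Λ†_U(φ1,φ2)`. -/
def lambdaDag {X : Type*} [MetricSpace X] (φ1 φ2 : X → EReal) (U : Set X) : EReal :=
  ⨅ V : {V : Set X // EssInt U V}, lambdaCirc φ1 φ2 V.1

/-- `inf_U (φ1 + φ2)`. -/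
def infSum {X : Type*} [MetricSpace X] (φ1 φ2 : X → EReal) (U : Set X) : EReal :=
  sInf {v : EReal | ∃ x ∈ U, v = φ1 x + φ2 x}

/-- `(φ1 ♦ φ2)_W (x1, x2)`. -/
def diamond {X : Type*} [MetricSpace X] (φ1 φ2 : X → EReal) (W : Set X) (x1 x2 : X) : EReal :=
  sInf {v : EReal | ∃ x ∈ W,
    v = max (max ((dist x x1 : ℝ) : EReal) ((dist x x2 : ℝ) : EReal))
        (φ1 x + φ2 x - φ1 x1 - φ2 x2)}

/-- `Θ°_U(φ1,φ2)` (with the convention `sup ∅ = 0`). -/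
def thetaCirc {X : Type*} [MetricSpace X] (φ1 φ2 : X → EReal) (U : Set X) : EReal :=
  ⨅ η : {η : ℝ // 0 < η},
    sSup (insert (0 : EReal)
      {v : EReal | ∃ x1 x2 : X, φ1 x1 < ⊤ ∧ x1 ∈ U ∧ φ2 x2 < ⊤ ∧ x2 ∈ U ∧
        dist x1 x2 < η.1 ∧ v = diamond φ1 φ2 U x1 x2})

/-- `Θ†_{U,W}(φ1,φ2)`: as `Θ†_U`, but with the `♦`-expression taken over `W`. -/
def thetaDagW {X : Type*} [MetricSpace X] (φ1 φ2 : X → EReal) (U W : Set X) : EReal :=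
  ⨆ V : {V : Set X // EssInt U V}, ⨅ η : {η : ℝ // 0 < η},
    sSup (insert (0 : EReal)
      {v : EReal | ∃ x1 x2 : X, φ1 x1 < ⊤ ∧ x1 ∈ V.1 ∧ φ2 x2 < ⊤ ∧ x2 ∈ V.1 ∧
        dist x1 x2 < η.1 ∧ v = diamond φ1 φ2 W x1 x2})

/-- `Θ†_U(φ1,φ2)` (with the convention `sup ∅ = 0`). -/
def thetaDag {X : Type*} [MetricSpace X] (φ1 φ2 : X → EReal) (U : Set X) : EReal :=
  thetaDagW φ1 φ2 U U

/-- Indicator function of a set, in the `ℝ ∪ {+∞}` sense. -/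
def indFn {X : Type*} (Ω : Set X) : X → EReal := fun x =>
  haveI := Classical.propDecidable (x ∈ Ω)
  if x ∈ Ω then 0 else ⊤

/-- `Λ_U(φ1,φ2)`: the uniform infimum of `(φ1,φ2)` around `U`. -/
def lambdaFull {X : Type*} [MetricSpace X] (φ1 φ2 : X → EReal) (U : Set X) : EReal :=
  ⨆ η : {η : ℝ // 0 < η}, ⨆ ε : {ε : ℝ // 0 < ε},
    sInf {v : EReal | ∃ x1 x2 : X,
      dist x1 x2 < η.1 ∧ Metric.infDist x1 U < ε.1 ∧ v = φ1 x1 + φ2 x2}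

lemma key {X : Type*} [NormedAddCommGroup X] [NormedSpace ℝ X] [FiniteDimensional ℝ X]
    (Ω1 Ω2 : Set X) (h1 : IsClosed Ω1) (h2 : IsClosed Ω2)
    (U : Set X) (hbd : Bornology.IsBounded U)
    (V : Set X) (ρ : ℝ) (hρ : 0 < ρ) (hball : ∀ v ∈ V, Metric.ball v ρ ⊆ U)
    (ε : ℝ) (hε : 0 < ε) :
    ∃ η > (0:ℝ), ∀ x1 ∈ Ω1 ∩ V, ∀ x2 ∈ Ω2 ∩ V, dist x1 x2 < η →
      ∃ x ∈ (Ω1 ∩ Ω2) ∩ U, dist x x1 < ε ∧ dist x x2 < ε := by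
  have hVU : V ⊆ U := fun v hv => hball v hv (Metric.mem_ball_self hρ)
  have hclV : closure V ⊆ U := by
    intro y hy
    obtain ⟨v, hv, hd⟩ := Metric.mem_closure_iff.mp hy ρ hρ
    exact hball v hv (by simpa [Metric.mem_ball, dist_comm] using hd)
  by_contra h
  push_neg at h
  have h' : ∀ n : ℕ, ∃ x1 ∈ Ω1 ∩ V, ∃ x2 ∈ Ω2 ∩ V, dist x1 x2 < 1/(n+1) ∧
      ∀ x ∈ (Ω1 ∩ Ω2) ∩ U, dist x x1 < ε → ε ≤ dist x x2 := by
    intro n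
    exact h (1/(n+1)) (by positivity)
  choose x1 hx1 x2 hx2 hdist hbad using h'
  have hK : IsCompact (closure V) := (hbd.subset hVU).isCompact_closure
  obtain ⟨a, haV, φ, hφ, hlim⟩ := hK.tendsto_subseq (fun n => subset_closure (hx1 n).2)
  have hlim2 : Tendsto (fun n => x2 (φ n)) atTop (nhds a) := by
    rw [tendsto_iff_dist_tendsto_zero]
    apply squeeze_zero (fun n => dist_nonneg)
      (g := fun n => 1/(φ n + 1) + dist (x1 (φ n)) a)
    · intro n
      calc dist (x2 (φ n)) a ≤ dist (x2 (φ n)) (x1 (φ n)) + dist (x1 (φ n)) a :=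
            dist_triangle _ _ _
        _ ≤ 1/(φ n + 1) + dist (x1 (φ n)) a := by
            have := hdist (φ n); rw [dist_comm] at this; linarith
    · have h1 : Tendsto (fun n : ℕ => 1/((φ n : ℝ) + 1)) atTop (nhds 0) :=
        (tendsto_one_div_add_atTop_nhds_zero_nat.comp (hφ.tendsto_atTop))
      have h2 : Tendsto (fun n => dist (x1 (φ n)) a) atTop (nhds 0) :=
        (tendsto_iff_dist_tendsto_zero.mp hlim)
      simpa using h1.add h2
  have haU : a ∈ U := hclV haV
  have haΩ1 : a ∈ Ω1 := h1.mem_of_tendsto hlim (Eventually.of_forall fun n => (hx1 (φ n)).1)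
  have haΩ2 : a ∈ Ω2 := h2.mem_of_tendsto hlim2 (Eventually.of_forall fun n => (hx2 (φ n)).1)
  have hev1 : ∀ᶠ n in atTop, dist a (x1 (φ n)) < ε := by
    have := (tendsto_iff_dist_tendsto_zero.mp hlim)
    filter_upwards [this.eventually (gt_mem_nhds hε)] with n hn
    rwa [dist_comm]
  have hev2 : ∀ᶠ n in atTop, dist a (x2 (φ n)) < ε := by
    have := (tendsto_iff_dist_tendsto_zero.mp hlim2)
    filter_upwards [this.eventually (gt_mem_nhds hε)] with n hn
    rwa [dist_comm]
  obtain ⟨n, hn1, hn2⟩ := (hev1.and hev2).exists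
  exact absurd (hbad (φ n) a ⟨⟨haΩ1, haΩ2⟩, haU⟩ hn1) (not_le.mpr hn2)

lemma indFn_lt_top {X : Type*} {Ω : Set X} {x : X} (h : indFn Ω x < ⊤) : x ∈ Ω := by
  by_contra hx
  simp [indFn, hx] at h

lemma indFn_of_mem {X : Type*} {Ω : Set X} {x : X} (h : x ∈ Ω) : indFn Ω x = 0 := by
  simp [indFn, h]

/-- In a finite-dimensional Banach space, a pair of indicator functions of closed sets
is firmly quasiuniformly lower semicontinuous on any bounded set. -/
theorem stmt16 {X : Type*} [NormedAddCommGroup X] [NormedSpace ℝ X]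
    [FiniteDimensional ℝ X] (Ω1 Ω2 : Set X)
    (h1 : IsClosed Ω1) (h2 : IsClosed Ω2)
    (U : Set X) (hbd : Bornology.IsBounded U) (hne : (Ω1 ∩ Ω2 ∩ U).Nonempty) :
    thetaDag (indFn Ω1) (indFn Ω2) U = 0 := by
  apply le_antisymm
  · apply iSup_le
    rintro ⟨V, ρ, hρ, hball⟩
    -- show ⨅ η, sSup ... ≤ 0
    refine le_of_forall_gt_imp_ge_of_dense ?_
    intro c hc
    obtain ⟨ε, hε0, hεc⟩ := EReal.lt_iff_exists_real_btwn.mp hc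
    have hε0r : (0:ℝ) < ε := by exact_mod_cast hε0
    obtain ⟨η, hη, hkey⟩ := key Ω1 Ω2 h1 h2 U hbd V ρ hρ hball ε hε0r
    refine le_trans (iInf_le _ ⟨η, hη⟩) (le_trans (sSup_le ?_) hεc.le)
    rintro v hv
    rcases hv with rfl | ⟨a1, a2, ht1, ha1, ht2, ha2, hd, rfl⟩
    · exact_mod_cast hε0r.le
    · have hm1 : a1 ∈ Ω1 := indFn_lt_top ht1
      have hm2 : a2 ∈ Ω2 := indFn_lt_top ht2
      obtain ⟨x, ⟨⟨hxΩ1, hxΩ2⟩, hxU⟩, hd1, hd2⟩ := hkey a1 ⟨hm1, ha1⟩ a2 ⟨hm2, ha2⟩ hd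
      refine le_trans (sInf_le ⟨x, hxU, rfl⟩) ?_
      rw [indFn_of_mem hxΩ1, indFn_of_mem hxΩ2, indFn_of_mem hm1, indFn_of_mem hm2]
      have e0 : (0:EReal) + 0 - 0 - 0 = 0 := by
        norm_num
      rw [e0]
      have : max (max ((dist x a1 : ℝ):EReal) ((dist x a2 : ℝ):EReal)) 0 ≤ (ε : EReal) := by
        apply max_le
        apply max_le
        · exact_mod_cast hd1.le
        · exact_mod_cast hd2.le
        · exact_mod_cast hε0r.le
      exact this
  · have hV : EssInt U (∅ : Set X) := ⟨1, one_pos, by simp⟩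
    refine le_trans ?_ (le_iSup _ (⟨∅, hV⟩ : {V : Set X // EssInt U V}))
    simp only
    have : ∀ η : {η : ℝ // 0 < η},
        sSup (insert (0 : EReal)
          {v : EReal | ∃ x1 x2 : X, indFn Ω1 x1 < ⊤ ∧ x1 ∈ (∅ : Set X) ∧ indFn Ω2 x2 < ⊤ ∧
            x2 ∈ (∅ : Set X) ∧ dist x1 x2 < η.1 ∧ v = diamond (indFn Ω1) (indFn Ω2) U x1 x2})
          = 0 := by
      intro η
      have : {v : EReal | ∃ x1 x2 : X, indFn Ω1 x1 < ⊤ ∧ x1 ∈ (∅ : Set X) ∧ indFn Ω2 x2 < ⊤ ∧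
            x2 ∈ (∅ : Set X) ∧ dist x1 x2 < η.1 ∧ v = diamond (indFn Ω1) (indFn Ω2) U x1 x2}
          = ∅ := by
        ext v; simp
      rw [this]
      simp
    calc (0:EReal) = ⨅ η : {η : ℝ // 0 < η}, (0:EReal) := by
          rw [iInf_const]
      _ ≤ _ := by
          apply le_iInf
          intro η
          rw [this η]
          exact le_of_eq iInf_const
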